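/- Let E be a Banach lattice, μ a locally finite Borel measure on ℝ^d, D a finite collection of dyadic cubes, and f: ℝ^d → E a positive locally integrable function. Assume K := ‖M̃^μ_D‖_{L^1(μ;E) → L^{1,∞}(μ;E)} < ∞. For S ∈ D let ch_S(S) be the collection of maximal cubes S' ∈ D with S' ⊊ S satisfying ‖sup_{Q ∈ D, S' ⊆ Q ⊆ S} ⟨f⟩^μ_Q‖_E > 2K ⟨‖f‖_E⟩^μ_S; let S_0 be the maximal cubes of D, S_{k+1} := ∪_{S ∈ S_k} ch_S(S), and S := ∪_{k≥0} S_k. Then S is sparse: for every S ∈ S, the set E_S := S \ ∪_{S' ∈ ch_S(S)} S' satisfies μ(E_S) ≥ (1/2)μ(S), and the sets {E_S}_{S ∈ S} are pairwise disjoint. -/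

import Mathlib

open MeasureTheory ENNReal Set

attribute [local instance] Classical.propDecidable

/-- A dyadic cube in `ℝ^d`, given by a generation `k : ℤ` and a position `m : Fin d → ℤ`;
its underlying set is `∏_i [2^k m i, 2^k (m i + 1))`. -/
structure DyadicCube (d : ℕ) where
  k : ℤ
  m : Fin d → ℤ
deriving DecidableEq

/-- The underlying set of a dyadic cube. -/
def DyadicCube.set {d : ℕ} (Q : DyadicCube d) : Set (Fin d → ℝ) :=
  {x | ∀ i, (2 : ℝ) ^ Q.k * Q.m i ≤ x i ∧ x i < (2 : ℝ) ^ Q.k * (Q.m i + 1)}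

/-- A (non-dyadic) axis-parallel cube in `ℝ^d`, given by its corner and side length. -/
structure Cube (d : ℕ) where
  c : Fin d → ℝ
  len : ℝ
  len_pos : 0 < len

/-- The underlying set of an axis-parallel cube. -/
def Cube.set {d : ℕ} (Q : Cube d) : Set (Fin d → ℝ) :=
  {x | ∀ i, Q.c i ≤ x i ∧ x i < Q.c i + Q.len}

/-- The average `⟨f⟩^μ_A = (1/μ(A)) ∫_A f dμ` of a vector-valued function. -/
noncomputable def avg {d : ℕ} {E : Type*} [NormedAddCommGroup E] [NormedSpace ℝ E]
    (μ : Measure (Fin d → ℝ)) (A : Set (Fin d → ℝ)) (f : (Fin d → ℝ) → E) : E :=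
  (μ A).toReal⁻¹ • ∫ x in A, f x ∂μ

/-- The dyadic lattice Hardy–Littlewood maximal operator
`M̃^μ_D f (x) = sup_{Q ∈ D} ⟨|f|⟩^μ_Q 1_Q(x)` (a lattice supremum of finitely many
positive elements, realized as a fold of `⊔` with base point `0`). -/
noncomputable def dyadicMaximal {d : ℕ} {E : Type*} [NormedAddCommGroup E] [Lattice E] [HasSolidNorm E] [IsOrderedAddMonoid E]
    [NormedSpace ℝ E] (μ : Measure (Fin d → ℝ)) (D : Finset (DyadicCube d))
    (f : (Fin d → ℝ) → E) (x : Fin d → ℝ) : E :=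
  D.fold (· ⊔ ·) 0 fun Q => Set.indicator Q.set (fun _ => avg μ Q.set fun y => |f y|) x

/-- A collection of dyadic cubes is sparse (w.r.t. `μ`): each `Q` in the collection carries a
measurable subset `E_Q ⊆ Q` with `μ(Q) ≤ 2 μ(E_Q)`, the subsets being pairwise disjoint. -/
def IsSparse {d : ℕ} (μ : Measure (Fin d → ℝ)) (S : Finset (DyadicCube d)) : Prop :=
  ∃ ES : DyadicCube d → Set (Fin d → ℝ),
    (∀ Q ∈ S, ES Q ⊆ Q.set ∧ MeasurableSet (ES Q) ∧ μ Q.set ≤ 2 * μ (ES Q)) ∧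
    (S : Set (DyadicCube d)).Pairwise fun Q Q' => Disjoint (ES Q) (ES Q')

/-- The sparse operator `A^μ_{q,S} f (x) = (∑_{Q ∈ S} ⟨|f|⟩_Q^q 1_Q(x))^{1/q}` acting on
scalar-valued functions. -/
noncomputable def sparseOp {d : ℕ} (μ : Measure (Fin d → ℝ)) (q : ℝ)
    (S : Finset (DyadicCube d)) (f : (Fin d → ℝ) → ℝ) (x : Fin d → ℝ) : ℝ :=
  (∑ Q ∈ S, Set.indicator Q.set (fun _ => avg μ Q.set (fun y => |f y|) ^ q) x) ^ (1 / q)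

/-- `q`-convexity of a Banach lattice with constant `C`:
`‖(∑ |e k|^q)^{1/q}‖ ≤ C (∑ ‖e k‖^q)^{1/q}`. The Krivine element `(∑ |e k|^q)^{1/q}` is
characterized as the least upper bound of all combinations `∑ a k • |e k|` where the
nonnegative coefficients `a` lie in the unit ball of the norm dual to the `ℓ^q`-norm. -/
def IsQConvexWith (E : Type*) [NormedAddCommGroup E] [Lattice E] [HasSolidNorm E] [IsOrderedAddMonoid E] [NormedSpace ℝ E]
    (q C : ℝ) : Prop :=
  ∀ (n : ℕ) (e : Fin n → E) (s : E),
    IsLUB {x : E | ∃ a : Fin n → ℝ, (∀ k, 0 ≤ a k) ∧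
        (∀ t : Fin n → ℝ, (∀ k, 0 ≤ t k) → ∑ k, a k * t k ≤ (∑ k, t k ^ q) ^ (1 / q)) ∧
        x = ∑ k, a k • |e k|} s →
    ‖s‖ ≤ C * (∑ k, ‖e k‖ ^ q) ^ (1 / q)

/-- The Hardy–Littlewood property of a Banach lattice `E`: for some `p ∈ (1,∞)` the dyadic
lattice maximal operators (w.r.t. Lebesgue measure) are bounded on `L^p(dx; E)` uniformly in
the finite collection of dyadic cubes. -/
def HasHLProperty (d : ℕ) (E : Type*) [NormedAddCommGroup E] [Lattice E] [HasSolidNorm E] [IsOrderedAddMonoid E] [NormedSpace ℝ E] : Prop :=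
  ∃ p : ℝ, 1 < p ∧ ∃ C : ℝ, ∀ (D : Finset (DyadicCube d)) (f : (Fin d → ℝ) → E),
    MemLp f (ENNReal.ofReal p) volume →
    eLpNorm (dyadicMaximal volume D f) (ENNReal.ofReal p) volume ≤
      ENNReal.ofReal C * eLpNorm f (ENNReal.ofReal p) volume

/-- Order continuity of a Banach lattice: every downward directed set with infimum `0`
contains elements of arbitrarily small norm cofinally (i.e. the corresponding decreasing net
converges to `0` in norm). -/
def IsOrderContinuous (E : Type*) [NormedAddCommGroup E] [Lattice E] [HasSolidNorm E] [IsOrderedAddMonoid E] : Prop :=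
  ∀ A : Set E, A.Nonempty → DirectedOn (· ≥ ·) A → IsGLB A 0 →
    ∀ ε : ℝ, 0 < ε → ∃ a ∈ A, ∀ b ∈ A, b ≤ a → ‖b‖ < ε
/-- The Lebesgue average of `g` over `A`, valued in `ℝ≥0∞`. -/
noncomputable def scalarCubeAvg {d : ℕ} (A : Set (Fin d → ℝ)) (g : (Fin d → ℝ) → ℝ) : ℝ≥0∞ :=
  (volume A)⁻¹ * ∫⁻ x in A, ENNReal.ofReal (g x)

/-- The scalar (non-dyadic) Hardy–Littlewood maximal function, valued in `ℝ≥0∞`. -/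
noncomputable def scalarMaximal {d : ℕ} (g : (Fin d → ℝ) → ℝ) (x : Fin d → ℝ) : ℝ≥0∞ :=
  ⨆ (Q : Cube d) (_ : x ∈ Q.set), scalarCubeAvg Q.set fun y => |g y|

/-- The Muckenhoupt `A_p`-characteristic `[w]_{A_p} = sup_Q ⟨w⟩_Q ⟨w^{-1/(p-1)}⟩_Q^{p-1}`. -/
noncomputable def ApConst (d : ℕ) (p : ℝ) (w : (Fin d → ℝ) → ℝ) : ℝ≥0∞ :=
  ⨆ Q : Cube d,
    scalarCubeAvg Q.set w * scalarCubeAvg Q.set (fun x => w x ^ (-(1 / (p - 1)))) ^ (p - 1)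

/-- The Fujii–Wilson `A_∞`-characteristic `[w]_{A_∞} = sup_Q (∫_Q M(w 1_Q))/(∫_Q w)`. -/
noncomputable def AinfConst (d : ℕ) (w : (Fin d → ℝ) → ℝ) : ℝ≥0∞ :=
  ⨆ Q : Cube d, (∫⁻ x in Q.set, scalarMaximal (Q.set.indicator w) x) /
    ∫⁻ x in Q.set, ENNReal.ofReal (w x)

/-- The `A_1`-characteristic `[w]_{A_1} = sup_Q ⟨w⟩_Q ‖w⁻¹‖_{L^∞(Q)}`. -/
noncomputable def A1Const (d : ℕ) (w : (Fin d → ℝ) → ℝ) : ℝ≥0∞ :=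
  ⨆ Q : Cube d, scalarCubeAvg Q.set w *
    essSup (fun x => ENNReal.ofReal (w x)⁻¹) (volume.restrict Q.set)

/-- The measure `w dx` associated with a weight `w`. -/
noncomputable def wMeasure {d : ℕ} (w : (Fin d → ℝ) → ℝ) : Measure (Fin d → ℝ) :=
  volume.withDensity fun x => ENNReal.ofReal (w x)

/-- `g` is (a representative of) the non-dyadic lattice Hardy–Littlewood maximal function
`M̃f = sup_Q ⟨|f|⟩_Q 1_Q` (w.r.t. Lebesgue measure): `g` is strongly measurable and is the
least upper bound, in the almost-everywhere order of `L^0(dx; E)`, of the family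
`x ↦ ⟨|f|⟩_Q 1_Q(x)` indexed by all axis-parallel cubes `Q`. -/
def IsLatticeMaximalFn {d : ℕ} {E : Type*} [NormedAddCommGroup E] [Lattice E] [HasSolidNorm E] [IsOrderedAddMonoid E] [NormedSpace ℝ E]
    (f g : (Fin d → ℝ) → E) : Prop :=
  AEStronglyMeasurable g (volume : Measure (Fin d → ℝ)) ∧
  (∀ Q : Cube d, ∀ᵐ x ∂(volume : Measure (Fin d → ℝ)),
    Set.indicator Q.set (fun _ => avg volume Q.set fun y => |f y|) x ≤ g x) ∧
  ∀ h : (Fin d → ℝ) → E, AEStronglyMeasurable h (volume : Measure (Fin d → ℝ)) →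
    (∀ Q : Cube d, ∀ᵐ x ∂(volume : Measure (Fin d → ℝ)),
      Set.indicator Q.set (fun _ => avg volume Q.set fun y => |f y|) x ≤ h x) →
    ∀ᵐ x ∂(volume : Measure (Fin d → ℝ)), g x ≤ h x

/-- The lattice supremum `sup_{Q ∈ D, P Q} ⟨f⟩^μ_Q` (fold of `⊔` with base point `0`). -/
noncomputable def supAvgOver {d : ℕ} {E : Type*} [NormedAddCommGroup E] [Lattice E] [HasSolidNorm E] [IsOrderedAddMonoid E]
    [NormedSpace ℝ E] (μ : Measure (Fin d → ℝ)) (D : Finset (DyadicCube d))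
    (f : (Fin d → ℝ) → E) (P : DyadicCube d → Prop) : E :=
  (D.filter P).fold (· ⊔ ·) 0 fun Q => avg μ Q.set f

/-- The Muckenhoupt–Wheeden type stopping condition:
`‖sup_{Q ∈ D, S' ⊆ Q ⊆ S} ⟨f⟩^μ_Q‖ > 2 K ⟨‖f‖⟩^μ_S`. -/
def StopCond {d : ℕ} {E : Type*} [NormedAddCommGroup E] [Lattice E] [HasSolidNorm E] [IsOrderedAddMonoid E] [NormedSpace ℝ E]
    (μ : Measure (Fin d → ℝ)) (D : Finset (DyadicCube d)) (f : (Fin d → ℝ) → E) (K : ℝ)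
    (S' S : DyadicCube d) : Prop :=
  2 * K * avg μ S.set (fun y => ‖f y‖) <
    ‖supAvgOver μ D f fun Q => S'.set ⊆ Q.set ∧ Q.set ⊆ S.set‖

/-- The stopping children of `S`: maximal cubes `S' ∈ D`, `S' ⊊ S`, satisfying the stopping
condition. -/
noncomputable def stopChildren {d : ℕ} {E : Type*} [NormedAddCommGroup E] [Lattice E] [HasSolidNorm E] [IsOrderedAddMonoid E]
    [NormedSpace ℝ E] (μ : Measure (Fin d → ℝ)) (D : Finset (DyadicCube d))
    (f : (Fin d → ℝ) → E) (K : ℝ) (S : DyadicCube d) : Finset (DyadicCube d) :=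
  D.filter fun S' => S'.set ⊂ S.set ∧ StopCond μ D f K S' S ∧
    ∀ S'' ∈ D, S''.set ⊂ S.set → StopCond μ D f K S'' S → S'.set ⊆ S''.set → S'' = S'

/-- The generations of stopping cubes: generation `0` consists of the maximal cubes of `D`,
and generation `k+1` consists of the stopping children of the cubes of generation `k`. -/
noncomputable def stopLayer {d : ℕ} {E : Type*} [NormedAddCommGroup E] [Lattice E] [HasSolidNorm E] [IsOrderedAddMonoid E]
    [NormedSpace ℝ E] (μ : Measure (Fin d → ℝ)) (D : Finset (DyadicCube d))
    (f : (Fin d → ℝ) → E) (K : ℝ) : ℕ → Finset (DyadicCube d)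
  | 0 => D.filter fun Q => ∀ Q' ∈ D, Q.set ⊆ Q'.set → Q'.set ⊆ Q.set
  | k + 1 => (stopLayer μ D f K k).biUnion (stopChildren μ D f K)

/-- The family of stopping cubes `𝒮 = ⋃_k 𝒮_k`. -/
noncomputable def stopFamily {d : ℕ} {E : Type*} [NormedAddCommGroup E] [Lattice E] [HasSolidNorm E] [IsOrderedAddMonoid E]
    [NormedSpace ℝ E] (μ : Measure (Fin d → ℝ)) (D : Finset (DyadicCube d))
    (f : (Fin d → ℝ) → E) (K : ℝ) : Finset (DyadicCube d) :=
  D.filter fun Q => ∃ k, Q ∈ stopLayer μ D f K k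

/-- `S` is the stopping parent of `Q` w.r.t. the family `𝒮`: the minimal cube of `𝒮`
containing `Q`. -/
def IsStopParent {d : ℕ} (𝒮 : Finset (DyadicCube d)) (Q S : DyadicCube d) : Prop :=
  S ∈ 𝒮 ∧ Q.set ⊆ S.set ∧ ∀ S' ∈ 𝒮, Q.set ⊆ S'.set → S.set ⊆ S'.set

/-- The lattice supremum `sup_{Q ∈ D, P Q} ⟨f⟩^μ_Q 1_Q(x)`. -/
noncomputable def supIndAvgOver {d : ℕ} {E : Type*} [NormedAddCommGroup E] [Lattice E] [HasSolidNorm E] [IsOrderedAddMonoid E]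
    [NormedSpace ℝ E] (μ : Measure (Fin d → ℝ)) (D : Finset (DyadicCube d))
    (f : (Fin d → ℝ) → E) (P : DyadicCube d → Prop) (x : Fin d → ℝ) : E :=
  (D.filter P).fold (· ⊔ ·) 0 fun Q => Set.indicator Q.set (fun _ => avg μ Q.set f) x

section Fold
variable {α β : Type*} [SemilatticeSup β] {s : Finset α} {g : α → β} {b c : β}

lemma fold_sup_le (hb : b ≤ c) (h : ∀ a ∈ s, g a ≤ c) :
    s.fold (· ⊔ · : β → β → β) b g ≤ c := by
  induction s using Finset.cons_induction with
  | empty => simpa using hb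
  | cons a t ha ih =>
    rw [Finset.fold_cons]
    exact sup_le (h _ (Finset.mem_cons_self _ _))
      (ih fun a has => h a (Finset.mem_cons_of_mem has))

lemma base_le_fold_sup : b ≤ s.fold (· ⊔ · : β → β → β) b g := by
  induction s using Finset.cons_induction with
  | empty => simp
  | cons a t ha ih => rw [Finset.fold_cons]; exact ih.trans le_sup_right

lemma le_fold_sup_of_mem {a : α} (ha : a ∈ s) : g a ≤ s.fold (· ⊔ · : β → β → β) b g := by
  induction s using Finset.cons_induction with
  | empty => simp at ha
  | cons a' t ha' ih =>
    rw [Finset.fold_cons]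
    rcases Finset.mem_cons.1 ha with rfl | h
    · exact le_sup_left
    · exact (ih h).trans le_sup_right
end Fold

namespace DyadicCube
variable {d : ℕ}

lemma measurableSet_set (Q : DyadicCube d) : MeasurableSet Q.set := by
  have : Q.set = ⋂ i, (fun x : Fin d → ℝ => x i) ⁻¹'
      (Set.Ico ((2:ℝ) ^ Q.k * Q.m i) ((2:ℝ) ^ Q.k * (Q.m i + 1))) := by
    ext x; simp [DyadicCube.set, Set.mem_iInter, Set.mem_Ico]
  rw [this]
  exact MeasurableSet.iInter fun i => measurableSet_Ico.preimage (measurable_pi_apply i)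

/-- The lower-left corner of a dyadic cube. -/
noncomputable def corner (Q : DyadicCube d) : Fin d → ℝ := fun i => (2:ℝ) ^ Q.k * Q.m i

lemma corner_mem (Q : DyadicCube d) : Q.corner ∈ Q.set := by
  intro i
  refine ⟨le_rfl, ?_⟩
  have h2 : (0:ℝ) < (2:ℝ) ^ Q.k := zpow_pos two_pos _
  have : (Q.m i : ℝ) < (Q.m i : ℝ) + 1 := lt_add_one _
  exact mul_lt_mul_of_pos_left this h2

lemma set_nonempty (Q : DyadicCube d) : Q.set.Nonempty := ⟨Q.corner, Q.corner_mem⟩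

lemma set_subset_Icc (Q : DyadicCube d) :
    Q.set ⊆ Set.Icc Q.corner (fun i => (2:ℝ) ^ Q.k * (Q.m i + 1)) := by
  intro x hx
  rw [Set.mem_Icc]
  exact ⟨fun i => (hx i).1, fun i => (hx i).2.le⟩

lemma measure_lt_top (Q : DyadicCube d) (μ : MeasureTheory.Measure (Fin d → ℝ))
    [MeasureTheory.IsLocallyFiniteMeasure μ] : μ Q.set < ⊤ :=
  lt_of_le_of_lt (MeasureTheory.measure_mono Q.set_subset_Icc) isCompact_Icc.measure_lt_top

/-- 1-D dyadic nesting: if two dyadic intervals share a point and the first has smaller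
scale, then the first's endpoints are trapped by the second's. -/
lemma dyadic_interval_nested {k1 k2 m1 m2 : ℤ} (hk : k1 ≤ k2) {x : ℝ}
    (h1a : (2:ℝ) ^ k1 * m1 ≤ x) (h1b : x < (2:ℝ) ^ k1 * (m1 + 1))
    (h2a : (2:ℝ) ^ k2 * m2 ≤ x) (h2b : x < (2:ℝ) ^ k2 * (m2 + 1)) :
    (2:ℝ) ^ k2 * m2 ≤ (2:ℝ) ^ k1 * m1 ∧ (2:ℝ) ^ k1 * (m1 + 1) ≤ (2:ℝ) ^ k2 * (m2 + 1) := by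
  set n : ℤ := 2 ^ (k2 - k1).toNat with hn
  have hp : (0:ℝ) < (2:ℝ) ^ k1 := zpow_pos two_pos _
  have h2k : (2:ℝ) ^ k2 = (2:ℝ) ^ k1 * (n : ℝ) := by
    have : (2:ℝ) ^ k2 = (2:ℝ) ^ (k1 + (k2 - k1)) := by ring_nf
    rw [this, zpow_add₀ (two_ne_zero) k1 (k2 - k1)]
    congr 1
    rw [hn]
    push_cast
    rw [← zpow_natCast (2:ℝ) (k2 - k1).toNat, Int.toNat_of_nonneg (by omega)]
  set y : ℝ := x / (2:ℝ) ^ k1 with hy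
  have hy1a : (m1 : ℝ) ≤ y := (le_div_iff₀ hp).2 (by linarith [h1a])
  have hy1b : y < (m1 : ℝ) + 1 := (div_lt_iff₀ hp).2 (by linarith [h1b])
  have hy2a : ((n * m2 : ℤ) : ℝ) ≤ y := by
    rw [le_div_iff₀ hp]
    push_cast
    push_cast [h2k] at h2a
    linarith [h2a]
  have hy2b : y < ((n * (m2 + 1) : ℤ) : ℝ) := by
    rw [div_lt_iff₀ hp]
    push_cast
    push_cast [h2k] at h2b
    linarith [h2b]
  have hfl : ⌊y⌋ = m1 := Int.floor_eq_iff.2 ⟨hy1a, hy1b⟩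
  have hle1 : n * m2 ≤ m1 := by rw [← hfl]; exact Int.le_floor.2 hy2a
  have hle2 : m1 + 1 ≤ n * (m2 + 1) := by
    have : (m1 : ℝ) < ((n * (m2 + 1) : ℤ) : ℝ) := lt_of_le_of_lt hy1a hy2b
    exact_mod_cast this
  constructor
  · rw [h2k, mul_assoc]
    have : ((n : ℝ) * m2) ≤ (m1 : ℝ) := by exact_mod_cast hle1
    exact mul_le_mul_of_nonneg_left this hp.le
  · rw [h2k, mul_assoc]
    have : ((m1 : ℝ) + 1) ≤ (n : ℝ) * ((m2 : ℝ) + 1) := by exact_mod_cast hle2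
    exact mul_le_mul_of_nonneg_left this hp.le

lemma set_subset_or_subset {Q1 Q2 : DyadicCube d} (h : (Q1.set ∩ Q2.set).Nonempty) :
    Q1.set ⊆ Q2.set ∨ Q2.set ⊆ Q1.set := by
  obtain ⟨x, hx1, hx2⟩ := h
  rcases le_total Q1.k Q2.k with hk | hk
  · left
    intro z hz i
    obtain ⟨hA, hB⟩ := dyadic_interval_nested hk (hx1 i).1 (hx1 i).2 (hx2 i).1 (hx2 i).2
    exact ⟨hA.trans (hz i).1, (hz i).2.trans_le hB⟩
  · right
    intro z hz i
    obtain ⟨hA, hB⟩ := dyadic_interval_nested hk (hx2 i).1 (hx2 i).2 (hx1 i).1 (hx1 i).2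
    exact ⟨hA.trans (hz i).1, (hz i).2.trans_le hB⟩

lemma set_injective (hd : 1 ≤ d) {Q1 Q2 : DyadicCube d} (h : Q1.set = Q2.set) : Q1 = Q2 := by
  have hIco : ∀ i, Set.Ico ((2:ℝ) ^ Q1.k * Q1.m i) ((2:ℝ) ^ Q1.k * (Q1.m i + 1)) =
      Set.Ico ((2:ℝ) ^ Q2.k * Q2.m i) ((2:ℝ) ^ Q2.k * (Q2.m i + 1)) := by
    intro i
    ext t
    constructor
    · intro ht
      have hp : Function.update Q1.corner i t ∈ Q1.set := by
        intro j
        rcases eq_or_ne j i with rfl | hj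
        · simpa using ht
        · simpa [Function.update_of_ne hj] using Q1.corner_mem j
      have := (h ▸ hp) i
      simpa using this
    · intro ht
      have hp : Function.update Q2.corner i t ∈ Q2.set := by
        intro j
        rcases eq_or_ne j i with rfl | hj
        · simpa using ht
        · simpa [Function.update_of_ne hj] using Q2.corner_mem j
      have := (h.symm ▸ hp) i
      simpa using this
  have hp1 : (0:ℝ) < (2:ℝ) ^ Q1.k := zpow_pos two_pos _
  have hp2 : (0:ℝ) < (2:ℝ) ^ Q2.k := zpow_pos two_pos _
  have hends : ∀ i : Fin d, (2:ℝ) ^ Q1.k * Q1.m i = (2:ℝ) ^ Q2.k * Q2.m i ∧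
      (2:ℝ) ^ Q1.k * (Q1.m i + 1) = (2:ℝ) ^ Q2.k * (Q2.m i + 1) := by
    intro i
    have hlt : (2:ℝ) ^ Q1.k * Q1.m i < (2:ℝ) ^ Q1.k * (Q1.m i + 1) :=
      mul_lt_mul_of_pos_left (lt_add_one _) hp1
    exact (Set.Ico_eq_Ico_iff (Or.inl hlt)).1 (hIco i)
  have i0 : Fin d := ⟨0, hd⟩
  have hkk : Q1.k = Q2.k := by
    have h1 := (hends i0).1
    have h2 := (hends i0).2
    have : (2:ℝ) ^ Q1.k = (2:ℝ) ^ Q2.k := by nlinarith [h1, h2]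
    exact zpow_right_injective₀ two_pos (by norm_num) this
  have hmm : Q1.m = Q2.m := by
    funext i
    have h1 := (hends i).1
    rw [hkk] at h1
    have : (Q1.m i : ℝ) = Q2.m i := mul_left_cancel₀ hp2.ne' h1
    exact_mod_cast this
  cases Q1; cases Q2
  simp_all

end DyadicCube
section Stopping
variable {d : ℕ} {E : Type*} [NormedAddCommGroup E] [Lattice E] [HasSolidNorm E] [IsOrderedAddMonoid E] [NormedSpace ℝ E]
  (μ : MeasureTheory.Measure (Fin d → ℝ)) (D : Finset (DyadicCube d))
  (f : (Fin d → ℝ) → E) (K : ℝ)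

lemma mem_stopChildren_iff {S' S : DyadicCube d} :
    S' ∈ stopChildren μ D f K S ↔ S' ∈ D ∧ S'.set ⊂ S.set ∧ StopCond μ D f K S' S ∧
      ∀ S'' ∈ D, S''.set ⊂ S.set → StopCond μ D f K S'' S → S'.set ⊆ S''.set → S'' = S' := by
  simp [stopChildren, Finset.mem_filter, and_assoc]

lemma stopLayer_subset : ∀ n, stopLayer μ D f K n ⊆ D
  | 0 => Finset.filter_subset _ _
  | (n + 1) => by
    intro Q hQ
    rw [stopLayer, Finset.mem_biUnion] at hQ
    obtain ⟨R, _, hQR⟩ := hQ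
    exact ((mem_stopChildren_iff μ D f K).1 hQR).1

lemma mem_stopFamily_of_layer {Q : DyadicCube d} {n : ℕ}
    (h : Q ∈ stopLayer μ D f K n) : Q ∈ stopFamily μ D f K :=
  Finset.mem_filter.2 ⟨stopLayer_subset μ D f K n h, ⟨n, h⟩⟩

lemma stopFamily_subset : stopFamily μ D f K ⊆ D := Finset.filter_subset _ _

lemma stopChildren_congr {R S : DyadicCube d} (h : R.set = S.set) :
    stopChildren μ D f K R = stopChildren μ D f K S := by
  unfold stopChildren; congr 1; funext x; simp only [StopCond, h]

lemma claimE : ∀ (n : ℕ) (T S : DyadicCube d), T ∈ stopFamily μ D f K →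
    S ∈ stopFamily μ D f K → (D.filter fun Q => T.set ⊂ Q.set).card ≤ n →
    T.set ⊂ S.set → ∃ S' ∈ stopChildren μ D f K S, T.set ⊆ S'.set := by
  intro n
  induction n with
  | zero =>
    intro T S hT hS hcard hTS
    exfalso
    have hSmem : S ∈ D.filter fun Q => T.set ⊂ Q.set :=
      Finset.mem_filter.2 ⟨stopFamily_subset μ D f K hS, hTS⟩
    have := Finset.card_pos.2 ⟨S, hSmem⟩
    omega
  | succ n ih =>
    intro T S hT hS hcard hTS
    obtain ⟨hTD, k, hTk⟩ := Finset.mem_filter.1 hT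
    match k, hTk with
    | 0, hTk =>
      exfalso
      rw [stopLayer, Finset.mem_filter] at hTk
      exact hTS.not_subset (hTk.2 S (stopFamily_subset μ D f K hS) hTS.subset)
    | (k + 1), hTk =>
      rw [stopLayer, Finset.mem_biUnion] at hTk
      obtain ⟨R, hRk, hTR⟩ := hTk
      have hRfam : R ∈ stopFamily μ D f K := mem_stopFamily_of_layer μ D f K hRk
      obtain ⟨hTD', hTRss, hTRcond, hTRmax⟩ := (mem_stopChildren_iff μ D f K).1 hTR
      obtain ⟨x, hx⟩ := T.set_nonempty
      have hnest : R.set ⊆ S.set ∨ S.set ⊆ R.set := by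
        rcases DyadicCube.set_subset_or_subset ⟨x, hTRss.subset hx, hTS.subset hx⟩ with h | h
        · exact Or.inl h
        · exact Or.inr h
      rcases eq_or_ne R.set S.set with heq | hne
      · exact ⟨T, (stopChildren_congr μ D f K heq) ▸ hTR, subset_rfl⟩
      rcases hnest with hsub | hsub
      · -- R ⊊ S : apply IH to (R, S)
        have hRS : R.set ⊂ S.set := hsub.ssubset_of_ne hne
        have hmono : (D.filter fun Q => R.set ⊂ Q.set) ⊂ D.filter fun Q => T.set ⊂ Q.set := by
          refine Finset.ssubset_iff_of_subset ?_ |>.2 ?_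
          · intro Q hQ
            obtain ⟨hQD, hQR⟩ := Finset.mem_filter.1 hQ
            exact Finset.mem_filter.2 ⟨hQD, hTRss.trans hQR⟩
          · refine ⟨R, Finset.mem_filter.2 ⟨stopFamily_subset μ D f K hRfam, hTRss⟩, ?_⟩
            exact fun hmem => absurd rfl (Finset.mem_filter.1 hmem).2.ne
        have hcard' : (D.filter fun Q => R.set ⊂ Q.set).card ≤ n := by
          have := Finset.card_lt_card hmono
          omega
        obtain ⟨S', hS', hRS'⟩ := ih R S hRfam hS hcard' hRS
        exact ⟨S', hS', hTRss.subset.trans hRS'⟩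
      · -- S ⊊ R : impossible
        exfalso
        have hSR : S.set ⊂ R.set := hsub.ssubset_of_ne (fun h => hne h.symm)
        have hmono : (D.filter fun Q => S.set ⊂ Q.set) ⊂ D.filter fun Q => T.set ⊂ Q.set := by
          refine Finset.ssubset_iff_of_subset ?_ |>.2 ?_
          · intro Q hQ
            obtain ⟨hQD, hQR⟩ := Finset.mem_filter.1 hQ
            exact Finset.mem_filter.2 ⟨hQD, hTS.trans hQR⟩
          · refine ⟨S, Finset.mem_filter.2 ⟨stopFamily_subset μ D f K hS, hTS⟩, ?_⟩
            exact fun hmem => absurd rfl (Finset.mem_filter.1 hmem).2.ne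
        have hcard' : (D.filter fun Q => S.set ⊂ Q.set).card ≤ n := by
          have := Finset.card_lt_card hmono
          omega
        obtain ⟨S'', hS'', hSS''⟩ := ih S R hS hRfam hcard' hSR
        obtain ⟨hS''D, hS''ss, hS''cond, _⟩ := (mem_stopChildren_iff μ D f K).1 hS''
        have : S'' = T := hTRmax S'' hS''D hS''ss hS''cond (hTS.subset.trans hSS'')
        rw [this] at hSS''
        exact hTS.not_subset hSS''
end Stopping
section Analysis
open MeasureTheory
variable {d : ℕ} {E : Type*} [NormedAddCommGroup E] [Lattice E] [HasSolidNorm E] [IsOrderedAddMonoid E] [NormedSpace ℝ E]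
  {μ : MeasureTheory.Measure (Fin d → ℝ)} {D : Finset (DyadicCube d)}
  {f : (Fin d → ℝ) → E} {K : ℝ}

lemma avg_nonneg' {A : Set (Fin d → ℝ)} {h : (Fin d → ℝ) → ℝ} (hh : ∀ x, 0 ≤ h x) :
    0 ≤ avg μ A h := by
  unfold avg
  exact smul_nonneg (inv_nonneg.2 ENNReal.toReal_nonneg) (integral_nonneg fun x => hh x)

lemma integrableOn_cube [IsLocallyFiniteMeasure μ] (hf : LocallyIntegrable f μ)
    (Q : DyadicCube d) : IntegrableOn f Q.set μ :=
  (hf.integrableOn_isCompact isCompact_Icc).mono_set Q.set_subset_Icc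

lemma child_pointwise (hfpos : ∀ x, 0 ≤ f x) {S S' : DyadicCube d}
    (hS' : S' ∈ stopChildren μ D f K S) {x : Fin d → ℝ} (hx : x ∈ S'.set) :
    2 * K * avg μ S.set (fun y => ‖f y‖) < ‖dyadicMaximal μ D (S.set.indicator f) x‖ := by
  obtain ⟨hS'D, hss, hcond, _⟩ := (mem_stopChildren_iff μ D f K).1 hS'
  have hcond' : 2 * K * avg μ S.set (fun y => ‖f y‖) <
      ‖supAvgOver μ D f fun Q => S'.set ⊆ Q.set ∧ Q.set ⊆ S.set‖ := hcond
  refine lt_of_lt_of_le hcond' ?_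
  set g := S.set.indicator f with hg
  have hM0 : (0 : E) ≤ dyadicMaximal μ D g x := by
    unfold dyadicMaximal; exact base_le_fold_sup
  have hsup0 : (0 : E) ≤ supAvgOver μ D f fun Q => S'.set ⊆ Q.set ∧ Q.set ⊆ S.set := by
    unfold supAvgOver; exact base_le_fold_sup
  refine HasSolidNorm.solid ?_
  rw [abs_of_nonneg hsup0, abs_of_nonneg hM0]
  unfold supAvgOver dyadicMaximal
  refine fold_sup_le base_le_fold_sup ?_
  intro Q hQ
  simp only [Finset.mem_filter] at hQ
  obtain ⟨hQD, hPQ⟩ := hQ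
  have hxQ : x ∈ Q.set := hPQ.1 hx
  have heq : avg μ Q.set f =
      Set.indicator Q.set (fun _ => avg μ Q.set fun y => |g y|) x := by
    rw [Set.indicator_of_mem hxQ]
    unfold avg
    congr 1
    refine setIntegral_congr_fun Q.measurableSet_set (fun y hy => ?_)
    simp only [hg, Set.indicator_of_mem (hPQ.2 hy)]
    exact (abs_of_nonneg (hfpos y)).symm
  rw [heq]
  exact le_fold_sup_of_mem (s := D)
    (g := fun Q => Set.indicator Q.set (fun _ => avg μ Q.set fun y => |g y|) x) (b := 0) hQD

lemma lintegral_indicator_nnnorm (g : (Fin d → ℝ) → E) {S : Set (Fin d → ℝ)}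
    (hS : MeasurableSet S) :
    ∫⁻ x, ‖S.indicator g x‖₊ ∂μ = ∫⁻ x in S, ‖g x‖₊ ∂μ := by
  rw [← lintegral_indicator hS]
  congr 1
  funext x
  by_cases hx : x ∈ S <;> simp [hx]

lemma measure_le_two_mul_aux [IsLocallyFiniteMeasure μ]
    (hfpos : ∀ x, 0 ≤ f x) (hf : LocallyIntegrable f μ) (hK0 : 0 ≤ K)
    (hKweak : ∀ g : (Fin d → ℝ) → E, Integrable g μ → ∀ lam : ℝ, 0 < lam →
      ENNReal.ofReal lam * μ {x | lam < ‖dyadicMaximal μ D g x‖} ≤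
        ENNReal.ofReal K * ∫⁻ x, ‖g x‖₊ ∂μ)
    (S : DyadicCube d) :
    2 * μ (⋃ S' ∈ stopChildren μ D f K S, DyadicCube.set S') ≤ μ S.set := by
  classical
  set U := ⋃ S' ∈ stopChildren μ D f K S, DyadicCube.set S' with hU
  by_cases hU0 : μ U = 0
  · simp [hU0]
  have hUsub : U ⊆ S.set := by
    refine Set.iUnion₂_subset fun S' hS' => ?_
    exact ((mem_stopChildren_iff μ D f K).1 hS').2.1.subset
  have hSfin : μ S.set ≠ ⊤ := (S.measure_lt_top μ).ne
  set g := S.set.indicator f with hg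
  have hfint : IntegrableOn f S.set μ := integrableOn_cube hf S
  have hgint : Integrable g μ := (integrable_indicator_iff S.measurableSet_set).2 hfint
  have hIlt : ∫⁻ x, ‖g x‖₊ ∂μ = ∫⁻ x in S.set, ‖f x‖₊ ∂μ :=
    lintegral_indicator_nnnorm f S.measurableSet_set
  set I := ∫⁻ x in S.set, ‖f x‖₊ ∂μ with hI
  set A := avg μ S.set fun y => ‖f y‖ with hA
  have hUb : ∀ x ∈ U, 2 * K * A < ‖dyadicMaximal μ D g x‖ := by
    intro x hx
    obtain ⟨S', hS', hxS'⟩ := Set.mem_iUnion₂.1 hx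
    exact child_pointwise hfpos hS' hxS'
  by_cases hK : K = 0
  · exfalso
    apply hU0
    have hsub : U ⊆ ⋃ n : ℕ, {x | (1:ℝ)/(n+1) < ‖dyadicMaximal μ D g x‖} := by
      intro x hx
      have h0 : (0:ℝ) < ‖dyadicMaximal μ D g x‖ := by
        have := hUb x hx; rw [hK] at this; simpa using this
      obtain ⟨n, hn⟩ := exists_nat_one_div_lt h0
      exact Set.mem_iUnion.2 ⟨n, hn⟩
    refine measure_mono_null hsub (measure_iUnion_null fun n => ?_)
    have hw := hKweak g hgint (1/(n+1)) (by positivity)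
    rw [hK] at hw
    simp only [ENNReal.ofReal_zero, zero_mul, nonpos_iff_eq_zero, mul_eq_zero] at hw
    rcases hw with h | h
    · exact absurd h (ENNReal.ofReal_pos.2 (by positivity : (0:ℝ) < 1/(n+1))).ne'
    · exact h
  have hKpos : 0 < K := lt_of_le_of_ne hK0 (Ne.symm hK)
  by_cases hS0 : μ S.set = 0
  · exact absurd (measure_mono_null hUsub hS0) hU0
  by_cases hI0 : I = 0
  · exfalso
    apply hU0
    have hfa : ∀ᵐ y ∂(μ.restrict S.set), f y = 0 := by
      have hmeas : AEMeasurable (fun y => (‖f y‖₊ : ℝ≥0∞)) (μ.restrict S.set) :=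
        hfint.aestronglyMeasurable.enorm
      have h0 := (lintegral_eq_zero_iff' hmeas).1 hI0
      filter_upwards [h0] with y hy
      simpa using hy
    have hchild : stopChildren μ D f K S = ∅ := by
      rw [Finset.eq_empty_iff_forall_notMem]
      intro S' hS'
      obtain ⟨_, hss, hcond, _⟩ := (mem_stopChildren_iff μ D f K).1 hS'
      have hcond' : 2 * K * A <
          ‖supAvgOver μ D f fun Q => S'.set ⊆ Q.set ∧ Q.set ⊆ S.set‖ := hcond
      have hsup : supAvgOver μ D f (fun Q => S'.set ⊆ Q.set ∧ Q.set ⊆ S.set) = 0 := by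
        refine le_antisymm (fold_sup_le le_rfl ?_) base_le_fold_sup
        intro Q hQ
        simp only [Finset.mem_filter] at hQ
        obtain ⟨hQD, hPQ⟩ := hQ
        have hzero : ∫ y in Q.set, f y ∂μ = 0 :=
          integral_eq_zero_of_ae (ae_restrict_of_ae_restrict_of_subset hPQ.2 hfa)
        unfold avg
        rw [hzero, smul_zero]
      
      rw [hsup] at hcond'
      have hA0 : 0 ≤ A := avg_nonneg' fun x => norm_nonneg _
      simp only [norm_zero] at hcond'
      nlinarith
    simp [hU, hchild]
  have hIfin : I ≠ ⊤ := hfint.2.ne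
  have hAval : A = (μ S.set).toReal⁻¹ * I.toReal := by
    rw [hA]
    unfold avg
    rw [smul_eq_mul]
    congr 1
    exact integral_norm_eq_lintegral_enorm hfint.aestronglyMeasurable
  have hApos : 0 < A := by
    rw [hAval]
    exact mul_pos (inv_pos.2 (ENNReal.toReal_pos hS0 hSfin)) (ENNReal.toReal_pos hI0 hIfin)
  set lam := 2 * K * A with hlamdef
  have hlam : 0 < lam := mul_pos (mul_pos two_pos hKpos) hApos
  have hw := hKweak g hgint lam hlam
  rw [hIlt] at hw
  have hμU : μ U ≤ μ {x | lam < ‖dyadicMaximal μ D g x‖} :=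
    measure_mono fun x hx => hUb x hx
  have hkey : ENNReal.ofReal lam * μ S.set = 2 * (ENNReal.ofReal K * I) := by
    conv_lhs => rw [← ENNReal.ofReal_toReal hSfin]
    rw [← ENNReal.ofReal_mul hlam.le]
    have hmul : lam * (μ S.set).toReal = 2 * (K * I.toReal) := by
      rw [hlamdef, hAval]
      have hne : (μ S.set).toReal ≠ 0 := (ENNReal.toReal_pos hS0 hSfin).ne'
      field_simp
    rw [hmul]
    rw [ENNReal.ofReal_mul (by norm_num), ENNReal.ofReal_mul hKpos.le,
      ENNReal.ofReal_toReal hIfin]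
    norm_num
  have hfinal : ENNReal.ofReal lam * (2 * μ U) ≤ ENNReal.ofReal lam * μ S.set := by
    rw [hkey]
    calc ENNReal.ofReal lam * (2 * μ U) = 2 * (ENNReal.ofReal lam * μ U) := by ring
    _ ≤ 2 * (ENNReal.ofReal K * I) :=
      mul_le_mul_right (le_trans (mul_le_mul_right hμU _) hw) 2
  exact (ENNReal.mul_le_mul_iff_right (ENNReal.ofReal_pos.2 hlam).ne' ENNReal.ofReal_ne_top).1
    hfinal

end Analysis

/-- from the proof of Theorem 1.4: the stopping family is sparse.
Let `K` be the `L^1(μ;E) → L^{1,∞}(μ;E)` norm of the dyadic lattice maximal operator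
`M̃^μ_D` (i.e. the least constant satisfying the weak-type `(1,1)` inequality), and let
`𝒮 = stopFamily μ D f K` be generated from the maximal cubes of `D` by iterating the
stopping condition `‖sup_{Q ∈ D, S' ⊆ Q ⊆ S} ⟨f⟩^μ_Q‖ > 2K ⟨‖f‖⟩^μ_S`. Then `𝒮` is sparse:
the sets `E_S = S \ ⋃_{S' ∈ ch(S)} S'` satisfy `μ(E_S) ≥ μ(S)/2` and are pairwise
disjoint. -/
theorem stopFamily_isSparse
    {d : ℕ} (hd : 1 ≤ d)
    (E : Type*) [NormedAddCommGroup E] [Lattice E] [HasSolidNorm E] [IsOrderedAddMonoid E] [NormedSpace ℝ E] [CompleteSpace E]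
    (μ : Measure (Fin d → ℝ)) [IsLocallyFiniteMeasure μ]
    (D : Finset (DyadicCube d)) (f : (Fin d → ℝ) → E)
    (hfpos : ∀ x, 0 ≤ f x) (hf : LocallyIntegrable f μ)
    (K : ℝ) (hK0 : 0 ≤ K)
    (hKweak : ∀ g : (Fin d → ℝ) → E, Integrable g μ → ∀ lam : ℝ, 0 < lam →
      ENNReal.ofReal lam * μ {x | lam < ‖dyadicMaximal μ D g x‖} ≤
        ENNReal.ofReal K * ∫⁻ x, ‖g x‖₊ ∂μ)
    (hKmin : ∀ K' : ℝ, 0 ≤ K' →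
      (∀ g : (Fin d → ℝ) → E, Integrable g μ → ∀ lam : ℝ, 0 < lam →
        ENNReal.ofReal lam * μ {x | lam < ‖dyadicMaximal μ D g x‖} ≤
          ENNReal.ofReal K' * ∫⁻ x, ‖g x‖₊ ∂μ) → K ≤ K') :
    (∀ S ∈ stopFamily μ D f K,
      μ S.set ≤ 2 * μ (S.set \ ⋃ S' ∈ stopChildren μ D f K S, DyadicCube.set S')) ∧
    (stopFamily μ D f K : Set (DyadicCube d)).Pairwise (fun S T =>
      Disjoint (S.set \ ⋃ S' ∈ stopChildren μ D f K S, DyadicCube.set S')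
        (T.set \ ⋃ S' ∈ stopChildren μ D f K T, DyadicCube.set S')) := by
  constructor
  · intro S hS
    set U := ⋃ S' ∈ stopChildren μ D f K S, DyadicCube.set S' with hcU
    have h2 : 2 * μ U ≤ μ S.set := measure_le_two_mul_aux hfpos hf hK0 hKweak S
    have hUmeas : MeasurableSet U :=
      (stopChildren μ D f K S).measurableSet_biUnion fun b _ => b.measurableSet_set
    have hSfin : μ S.set ≠ ⊤ := (S.measure_lt_top μ).ne
    have hsplit : μ (S.set ∩ U) + μ (S.set \ U) = μ S.set := measure_inter_add_diff _ hUmeas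
    have hmain : μ S.set + μ S.set ≤ μ S.set + 2 * μ (S.set \ U) := by
      calc μ S.set + μ S.set = 2 * (μ (S.set ∩ U) + μ (S.set \ U)) := by rw [hsplit]; ring
      _ = 2 * μ (S.set ∩ U) + 2 * μ (S.set \ U) := by ring
      _ ≤ μ S.set + 2 * μ (S.set \ U) := by
          refine add_le_add ?_ le_rfl
          exact le_trans (mul_le_mul_right (measure_mono Set.inter_subset_right) 2) h2
    exact (ENNReal.add_le_add_iff_left hSfin).1 hmain
  · intro S hS T hT hne
    rw [Set.disjoint_left]
    intro x hxS hxT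
    obtain ⟨hxS1, hxS2⟩ := hxS
    obtain ⟨hxT1, hxT2⟩ := hxT
    have key : ∀ P R : DyadicCube d, P ∈ stopFamily μ D f K → R ∈ stopFamily μ D f K →
        P ≠ R → R.set ⊆ P.set → ∀ y ∈ R.set,
        y ∈ ⋃ S' ∈ stopChildren μ D f K P, DyadicCube.set S' := by
      intro P R hP hR hnePR hsub y hy
      have hss : R.set ⊂ P.set :=
        hsub.ssubset_of_ne (fun h => hnePR (DyadicCube.set_injective hd h).symm)
      obtain ⟨S', hS', hsub'⟩ := claimE μ D f K _ R P hR hP le_rfl hss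
      exact Set.mem_iUnion₂.2 ⟨S', hS', hsub' hy⟩
    rcases DyadicCube.set_subset_or_subset (Q1 := S) (Q2 := T) ⟨x, hxS1, hxT1⟩ with h | h
    · exact hxT2 (key T S hT hS (Ne.symm hne) h x hxS1)
    · exact hxS2 (key S T hS hT hne h x hxT1)
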